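/- Let p be a prime, G a graph, Q = {0,1,...,p-1} ⊆ V(G), and suppose the cycle (0,1,...,p-1) appears in the cycle decomposition of some automorphism α of G. Suppose β ∈ Aut(G) fixes Q setwise and is not the identity on Q. If Q is partitioned into two nonempty sets A and B, then there exists 0 < ℓ < p such that the automorphism α^{-ℓ} β α^{ℓ} maps some vertex of A to some vertex of B. -/

import Mathlib

open Function

section Defs

universe u₁ u₂ u₃

variable {V : Type u₁} {W : Type u₂} {C : Type u₃}

/-- A coloring is distinguishing if only the identity automorphism preserves it. -/
def DistCol (G : SimpleGraph V) (c : V → C) : Prop :=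
  ∀ φ : G ≃g G, (∀ x, c (φ x) = c x) → ∀ x, φ x = x

/-- The distinguishing number: the least number of colors admitting a distinguishing coloring. -/
noncomputable def Dnum (G : SimpleGraph V) : ℕ :=
  sInf {k | ∃ c : V → Fin k, DistCol G c}

/-- The distinguishing threshold: the least `k` such that every `k`-coloring is distinguishing. -/
noncomputable def theta (G : SimpleGraph V) : ℕ :=
  sInf {k | ∀ c : V → Fin k, DistCol G c}

/-- The number of non-equivalent distinguishing colorings with at most `k` colors. -/
noncomputable def Phi (G : SimpleGraph V) (k : ℕ) : ℕ :=
  Nat.card (Quot fun c₁ c₂ : {c : V → Fin k // DistCol G c} =>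
    ∃ φ : G ≃g G, ∀ x, c₁.1 x = c₂.1 (φ x))

/-- Rooted version of distinguishing: only automorphisms fixing `v` are considered. -/
def DistColR (G : SimpleGraph V) (v : V) (c : V → C) : Prop :=
  ∀ φ : G ≃g G, φ v = v → (∀ x, c (φ x) = c x) → ∀ x, φ x = x

noncomputable def DnumR (G : SimpleGraph V) (v : V) : ℕ :=
  sInf {k | ∃ c : V → Fin k, DistColR G v c}

noncomputable def thetaR (G : SimpleGraph V) (v : V) : ℕ :=
  sInf {k | ∀ c : V → Fin k, DistColR G v c}

noncomputable def PhiR (G : SimpleGraph V) (v : V) (k : ℕ) : ℕ :=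
  Nat.card (Quot fun c₁ c₂ : {c : V → Fin k // DistColR G v c} =>
    ∃ φ : G ≃g G, φ v = v ∧ ∀ x, c₁.1 x = c₂.1 (φ x))

/-- A vertex `u` is steady if every automorphism of `G - u` extends to an
automorphism of `G` fixing `u`. -/
def Steady (G : SimpleGraph V) (u : V) : Prop :=
  ∀ ψ : G.induce {w : V | w ≠ u} ≃g G.induce {w : V | w ≠ u},
    ∃ φ : G ≃g G, φ u = u ∧ ∀ w : {w : V | w ≠ u}, φ ↑w = ↑(ψ w)

/-- The vertex-sum of the graphs `G i` (all containing the vertex `u`) at `u`: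
`none` is the central vertex obtained by identifying the copies of `u`. -/
def VertexSum {t : ℕ} (G : Fin t → SimpleGraph V) (u : V) :
    SimpleGraph (Option (Fin t × {w : V // w ≠ u})) where
  Adj x y :=
    (∃ i w, x = none ∧ y = some (i, w) ∧ (G i).Adj u w.1) ∨
    (∃ i w, y = none ∧ x = some (i, w) ∧ (G i).Adj u w.1) ∨
    (∃ i w z, x = some (i, w) ∧ y = some (i, z) ∧ (G i).Adj w.1 z.1)
  symm := by
    constructor
    rintro x y (⟨i, w, hx, hy, h⟩ | ⟨i, w, hy, hx, h⟩ | ⟨i, w, z, hx, hy, h⟩)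
    · exact Or.inr (Or.inl ⟨i, w, hx, hy, h⟩)
    · exact Or.inl ⟨i, w, hy, hx, h⟩
    · exact Or.inr (Or.inr ⟨i, z, w, hy, hx, h.symm⟩)
  loopless := by
    constructor
    rintro x (⟨i, w, hx, hy, h⟩ | ⟨i, w, hy, hx, h⟩ | ⟨i, w, z, hx, hy, h⟩)
    · rw [hx] at hy; exact nomatch hy
    · rw [hy] at hx; exact nomatch hx.symm
    · rw [hx] at hy
      obtain rfl : w = z := by simpa using hy
      exact h.ne rfl

/-- Disjoint union of the graphs `H i`. -/
def SigmaUnion {t : ℕ} (H : Fin t → SimpleGraph W) : SimpleGraph (Fin t × W) where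
  Adj x y := x.1 = y.1 ∧ (H x.1).Adj x.2 y.2
  symm := by
    constructor
    rintro ⟨i, a⟩ ⟨j, b⟩ ⟨rfl, h⟩
    exact ⟨rfl, h.symm⟩
  loopless := by constructor; rintro x ⟨-, h⟩; exact h.ne rfl

/-- A graph is 2-connected if it has at least 3 vertices and no cut vertex. -/
def TwoConnected (G : SimpleGraph V) [Fintype V] : Prop :=
  3 ≤ Fintype.card V ∧ ∀ x : V, (G.induce {w : V | w ≠ x}).Connected

/-- The smooth rooted product `G_s(H)` where `H` is rooted at `v`. -/
def RootedProd (G : SimpleGraph V) (H : SimpleGraph W) (v : W) :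
    SimpleGraph (V × W) where
  Adj x y := (x.1 = y.1 ∧ H.Adj x.2 y.2) ∨ (x.2 = v ∧ y.2 = v ∧ G.Adj x.1 y.1)
  symm := by
    constructor
    rintro x y (⟨h1, h2⟩ | ⟨h1, h2, h3⟩)
    · exact Or.inl ⟨h1.symm, h2.symm⟩
    · exact Or.inr ⟨h2, h1, h3.symm⟩
  loopless := by constructor; rintro x (⟨-, h⟩ | ⟨-, -, h⟩) <;> exact h.ne rfl

/-- The corona product `G ⊙ H`: the vertex `(g, none)` is the vertex `g` of `G`,
and `(g, some h)` is the vertex `h` in the copy of `H` attached to `g`. -/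
def Corona (G : SimpleGraph V) (H : SimpleGraph W) :
    SimpleGraph (V × Option W) where
  Adj x y :=
    (x.2 = none ∧ y.2 = none ∧ G.Adj x.1 y.1) ∨
    (x.1 = y.1 ∧ ∃ a b, x.2 = some a ∧ y.2 = some b ∧ H.Adj a b) ∨
    (x.1 = y.1 ∧ x.2 = none ∧ ∃ a, y.2 = some a) ∨
    (x.1 = y.1 ∧ y.2 = none ∧ ∃ a, x.2 = some a)
  symm := by
    constructor
    rintro x y (⟨h1, h2, h3⟩ | ⟨h1, a, b, h2, h3, h4⟩ | ⟨h1, h2, h3⟩ | ⟨h1, h2, h3⟩)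
    · exact Or.inl ⟨h2, h1, h3.symm⟩
    · exact Or.inr (Or.inl ⟨h1.symm, b, a, h3, h2, h4.symm⟩)
    · exact Or.inr (Or.inr (Or.inr ⟨h1.symm, h2, h3⟩))
    · exact Or.inr (Or.inr (Or.inl ⟨h1.symm, h2, h3⟩))
  loopless := by
    constructor
    rintro x (⟨-, -, h⟩ | ⟨-, a, b, h2, h3, h4⟩ | ⟨-, h2, a, h3⟩ | ⟨-, h2, a, h3⟩)
    · exact h.ne rfl
    · rw [h2] at h3; exact h4.ne (Option.some.inj h3)
    · rw [h2] at h3; exact nomatch h3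
    · rw [h2] at h3; exact nomatch h3

/-- The lexicographic product `G ∘ H`. -/
def LexProd (G : SimpleGraph V) (H : SimpleGraph W) : SimpleGraph (V × W) where
  Adj x y := G.Adj x.1 y.1 ∨ (x.1 = y.1 ∧ H.Adj x.2 y.2)
  symm := by
    constructor
    rintro x y (h | ⟨h1, h2⟩)
    exacts [Or.inl h.symm, Or.inr ⟨h1.symm, h2.symm⟩]
  loopless := by constructor; rintro x (h | ⟨-, h⟩) <;> exact h.ne rfl

/-- The number of cycles (orbits, counting fixed points) of a permutation. -/
noncomputable def numCycles (e : Equiv.Perm V) : ℕ :=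
  Nat.card (Quot fun x y : V => ∃ n : ℤ, (e ^ n) x = y)

end Defs

/-- if the cycle `(0,1,…,p-1)` (encoded by the injection `ι : ZMod p → V`)
appears in the cycle decomposition of `α`, `β` fixes `Q = range ι` setwise and is not
the identity on `Q`, and `A ∪ B` is a partition of `Q` into nonempty sets, then some
conjugate `α^{-ℓ} β α^{ℓ}` (with `0 < ℓ < p`) maps a vertex of `A` to a vertex of `B`. -/
theorem stmt2 {V : Type*} (p : ℕ) (hp : p.Prime) (G : SimpleGraph V)
    (ι : ZMod p → V) (hι : Function.Injective ι)
    (α β : G ≃g G)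
    (hα : ∀ i : ZMod p, α (ι i) = ι (i + 1))
    (hβQ : ∀ i : ZMod p, ∃ j : ZMod p, β (ι i) = ι j)
    (hβne : ∃ i : ZMod p, β (ι i) ≠ ι i)
    (A B : Set (ZMod p)) (hA : A.Nonempty) (hB : B.Nonempty)
    (hunion : A ∪ B = Set.univ) (hdisj : A ∩ B = ∅) :
    ∃ ℓ : ℕ, 0 < ℓ ∧ ℓ < p ∧ ∃ a ∈ A, ∃ b ∈ B,
      (α.toEquiv ^ ℓ).symm (β ((α.toEquiv ^ ℓ) (ι a))) = ι b := by
  classical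
  haveI := Fact.mk hp
  choose f hf using hβQ
  have hfinj : Function.Injective f := by
    intro i j h
    apply hι
    apply β.toEquiv.injective
    show β (ι i) = β (ι j)
    rw [hf, hf, h]
  have hpow : ∀ (n : ℕ) (a : ZMod p), (α.toEquiv ^ n) (ι a) = ι (a + n) := by
    intro n
    induction n with
    | zero => intro a; simp
    | succ n ih =>
      intro a
      rw [pow_succ, Equiv.Perm.mul_apply]
      have h1 : α.toEquiv (ι a) = ι (a + 1) := hα a
      rw [h1, ih]
      congr 1
      push_cast
      ring
  have hbne : (β : V → V) = fun x => β x := rfl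
  have hmemA : ∀ x : ZMod p, x ∉ B → x ∈ A := by
    intro x hx
    have hx2 : x ∈ A ∪ B := by rw [hunion]; exact Set.mem_univ x
    rcases hx2 with h | h
    · exact h
    · exact absurd h hx
  have hmemB : ∀ x : ZMod p, x ∉ A → x ∈ B := by
    intro x hx
    have hx2 : x ∈ A ∪ B := by rw [hunion]; exact Set.mem_univ x
    rcases hx2 with h | h
    · exact absurd h hx
    · exact h
  have hnd : ∀ x : ZMod p, x ∈ A → x ∈ B → False := by
    intro x h1 h2
    have : x ∈ A ∩ B := ⟨h1, h2⟩
    rw [hdisj] at this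
    exact this
  by_contra hcon
  push_neg at hcon
  -- main closure property
  have H : ∀ a ∈ A, ∀ z : ZMod p, z ≠ a → f z - z + a ∈ A := by
    intro a ha z hz
    set t : ZMod p := z - a with ht
    have ht0 : t ≠ 0 := sub_ne_zero.mpr hz
    set ℓ : ℕ := t.val with hℓ
    have hℓ0 : 0 < ℓ := by
      rcases Nat.eq_zero_or_pos ℓ with h | h
      · exact absurd ((ZMod.val_eq_zero t).mp h) ht0
      · exact h
    have hℓp : ℓ < p := ZMod.val_lt t
    have hcast : ((ℓ : ℕ) : ZMod p) = t := ZMod.natCast_rightInverse t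
    have key : (α.toEquiv ^ ℓ).symm (β ((α.toEquiv ^ ℓ) (ι a))) = ι (f (a + ℓ) - ℓ) := by
      rw [hpow]
      have h2 : β (ι (a + (ℓ : ZMod p))) = ι (f (a + (ℓ : ZMod p))) := hf _
      rw [h2, Equiv.symm_apply_eq, hpow]
      congr 1
      ring
    have hnB : f (a + t) - t ∉ B := by
      intro hb
      exact hcon ℓ hℓ0 hℓp a ha _ hb (by rw [key, hcast])
    have hAA := hmemA _ hnB
    have e : f (a + t) - t = f z - z + a := by
      rw [show a + t = z from by rw [ht]; ring, ht]
      ring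
    rwa [e] at hAA
  -- interval argument
  have key2 : ∀ z : ZMod p, f z ≠ z → z ∈ A ∧ f z ∉ A := by
    intro z hz
    set d : ZMod p := f z - z with hd
    have hd0 : d ≠ 0 := sub_ne_zero.mpr hz
    obtain ⟨a, ha⟩ := hA
    obtain ⟨b, hb⟩ := hB
    have hbA : b ∉ A := fun h => hnd b h hb
    have hex : ∃ n : ℕ, a + (n : ZMod p) * d ∉ A := by
      refine ⟨((b - a) * d⁻¹).val, ?_⟩
      have h1 : ((((b - a) * d⁻¹).val : ℕ) : ZMod p) = (b - a) * d⁻¹ :=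
        ZMod.natCast_rightInverse _
      rw [h1]
      have h2 : (b - a) * d⁻¹ * d = b - a := by
        field_simp
      rw [h2, add_sub_cancel]
      exact hbA
    set n := Nat.find hex with hn
    have hnspec : a + (n : ZMod p) * d ∉ A := Nat.find_spec hex
    have hn0 : n ≠ 0 := by
      intro h
      rw [h] at hnspec
      simp at hnspec
      exact hnspec ha
    have hn1 : a + ((n - 1 : ℕ) : ZMod p) * d ∈ A := by
      by_contra h
      exact Nat.find_min hex (Nat.sub_lt (Nat.pos_of_ne_zero hn0) one_pos) h
    have hcast : ((n - 1 : ℕ) : ZMod p) + 1 = (n : ZMod p) := by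
      have := Nat.succ_pred_eq_of_pos (Nat.pos_of_ne_zero hn0)
      calc ((n - 1 : ℕ) : ZMod p) + 1 = (((n - 1) + 1 : ℕ) : ZMod p) := by push_cast; ring
        _ = (n : ZMod p) := by rw [Nat.sub_add_cancel (Nat.one_le_iff_ne_zero.mpr hn0)]
    by_cases hez : z = a + ((n - 1 : ℕ) : ZMod p) * d
    · constructor
      · rw [hez]; exact hn1
      · have hfz : f z = a + (n : ZMod p) * d := by
          have : f z = z + d := by rw [hd]; ring
          rw [this, hez, ← hcast]; ring
        rw [hfz]; exact hnspec
    · exfalso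
      have hstep := H _ hn1 z hez
      apply hnspec
      have e : f z - z + (a + ((n - 1 : ℕ) : ZMod p) * d) = a + (n : ZMod p) * d := by
        rw [← hd, ← hcast]; ring
      rwa [e] at hstep
  obtain ⟨i, hi⟩ := hβne
  have hfi : f i ≠ i := fun h => hi (by rw [hf, h])
  obtain ⟨hiA, hfiA⟩ := key2 i hfi
  have hffi : f (f i) = f i := by
    by_contra h
    exact hfiA (key2 _ h).1
  exact hfi (hfinj hffi)
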